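/- Let {C1, C2, C3} be an arrangement of three circles. Then C3 separates the two intersection points of C1 and C2 if and only if the two intersection points of C1 and C2 lie in different connected components of C1 \ (C1 ∩ C3). -/

import Mathlib

noncomputable section

open Metric Set Complex
open scoped Real

/-- The Euclidean plane. -/
abbrev E2 := EuclideanSpace ℝ (Fin 2)

private lemma three_not_pair {α : Type*} {a b x y z : α} (hxy : x ≠ y) (hxz : x ≠ z)
    (hyz : y ≠ z) (hx : x ∈ ({a, b} : Set α)) (hy : y ∈ ({a, b} : Set α))
    (hz : z ∈ ({a, b} : Set α)) : False := by
  simp only [Set.mem_insert_iff, Set.mem_singleton_iff] at hx hy hz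
  rcases hx with rfl | rfl <;> rcases hy with rfl | rfl <;> rcases hz with rfl | rfl <;>
    simp_all

private lemma key_complex (c₁ c₃ : ℂ) (r₁ r₃ : ℝ) (hr₁ : 0 < r₁) (hr₃ : 0 < r₃)
    (a b : ℂ) (hab : a ≠ b)
    (h : sphere c₁ r₁ ∩ sphere c₃ r₃ = {a, b}) :
    IsConnected (sphere c₁ r₁ ∩ ball c₃ r₃) ∧
    IsConnected (sphere c₁ r₁ ∩ (closedBall c₃ r₃)ᶜ) := by
  have ha : a ∈ sphere c₁ r₁ ∩ sphere c₃ r₃ := by rw [h]; exact Or.inl rfl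
  have hb : b ∈ sphere c₁ r₁ ∩ sphere c₃ r₃ := by rw [h]; exact Or.inr rfl
  -- the centers are distinct
  have hne : c₁ ≠ c₃ := by
    rintro rfl
    have hr : r₁ = r₃ := by
      have h1 := ha.1; have h2 := ha.2
      rw [mem_sphere] at h1 h2; rw [← h1, ← h2]
    subst hr
    have h' : sphere c₁ r₁ = ({a, b} : Set ℂ) := by rw [← h, Set.inter_self]
    have p1 : c₁ + (r₁ : ℂ) ∈ sphere c₁ r₁ := by
      simp [mem_sphere, Complex.dist_eq, abs_of_pos hr₁]
    have p2 : c₁ - (r₁ : ℂ) ∈ sphere c₁ r₁ := by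
      simp [mem_sphere, Complex.dist_eq, abs_of_pos hr₁]
    have p3 : c₁ + (r₁ : ℂ) * I ∈ sphere c₁ r₁ := by
      simp [mem_sphere, Complex.dist_eq, abs_of_pos hr₁]
    have d12 : c₁ + (r₁ : ℂ) ≠ c₁ - (r₁ : ℂ) := by
      intro hc
      have := congrArg Complex.re hc
      simp at this; linarith
    have d13 : c₁ + (r₁ : ℂ) ≠ c₁ + (r₁ : ℂ) * I := by
      intro hc
      have := congrArg Complex.im hc
      simp at this; linarith
    have d23 : c₁ - (r₁ : ℂ) ≠ c₁ + (r₁ : ℂ) * I := by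
      intro hc
      have := congrArg Complex.im hc
      simp at this; linarith
    exact three_not_pair d12 d13 d23 (h' ▸ p1) (h' ▸ p2) (h' ▸ p3)
  set w : ℂ := c₃ - c₁ with hw_def
  have hw : w ≠ 0 := sub_ne_zero.mpr (Ne.symm hne)
  set d : ℝ := ‖w‖ with hd_def
  have hd0 : 0 < d := norm_pos_iff.mpr hw
  set u : ℂ := w / (d : ℂ) with hu_def
  have hu0 : (d : ℂ) ≠ 0 := by exact_mod_cast hd0.ne'
  have hu : ‖u‖ = 1 := by
    rw [hu_def, norm_div, Complex.norm_real, Real.norm_eq_abs, abs_of_pos hd0, div_self hd0.ne']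
  have hune : u ≠ 0 := by
    intro hc; rw [hc] at hu; simp at hu
  have hc₃ : c₃ = c₁ + (d : ℂ) * u := by
    rw [hu_def, mul_div_cancel₀ _ hu0, hw_def]; ring
  set f : ℝ → ℂ := fun θ => c₁ + ((r₁ : ℂ) * Complex.exp (θ * I)) * u with hf_def
  have hfc : Continuous f := by
    apply Continuous.add continuous_const
    apply Continuous.mul _ continuous_const
    exact continuous_const.mul (Complex.continuous_exp.comp
      ((Complex.continuous_ofReal).mul continuous_const))
  have hfs : ∀ θ, f θ ∈ sphere c₁ r₁ := by
    intro θ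
    simp only [hf_def, mem_sphere, Complex.dist_eq, add_sub_cancel_left, norm_mul,
      Complex.norm_real, Real.norm_eq_abs, Complex.norm_exp_ofReal_mul_I, hu, abs_of_pos hr₁]
    ring
  have hdist : ∀ θ, dist (f θ) c₃ ^ 2 = r₁ ^ 2 + d ^ 2 - 2 * (r₁ * d) * Real.cos θ := by
    intro θ
    have h1 : f θ - c₃ = ((r₁ : ℂ) * Complex.exp (θ * I) - (d : ℂ)) * u := by
      rw [hf_def, hc₃]; ring
    rw [Complex.dist_eq, h1, norm_mul, hu, mul_one, Complex.sq_norm, Complex.normSq_sub]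
    have h2 : Complex.normSq ((r₁ : ℂ) * Complex.exp (θ * I)) = r₁ ^ 2 := by
      rw [Complex.normSq_eq_norm_sq, norm_mul, Complex.norm_real, Real.norm_eq_abs,
        Complex.norm_exp_ofReal_mul_I, abs_of_pos hr₁, mul_one]
    have h3 : Complex.normSq (d : ℂ) = d ^ 2 := by
      rw [Complex.normSq_eq_norm_sq, Complex.norm_real, Real.norm_eq_abs, abs_of_pos hd0]
    have h4 : ((r₁ : ℂ) * Complex.exp (θ * I) * (starRingEnd ℂ) (d : ℂ)).re
        = r₁ * d * Real.cos θ := by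
      rw [Complex.conj_ofReal]
      have : (r₁ : ℂ) * Complex.exp (θ * I) * (d : ℂ)
          = ((r₁ * d : ℝ) : ℂ) * Complex.exp (θ * I) := by push_cast; ring
      rw [this, Complex.re_ofReal_mul, Complex.exp_ofReal_mul_I_re]
    rw [h2, h3, h4]; ring
  set t : ℝ := (r₁ ^ 2 + d ^ 2 - r₃ ^ 2) / (2 * (r₁ * d)) with ht_def
  have h2rd : (0:ℝ) < 2 * (r₁ * d) := by positivity
  have hsq_iff : ∀ x y : ℝ, 0 ≤ x → 0 ≤ y → (x < y ↔ x ^ 2 < y ^ 2) := by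
    intro x y hx hy
    constructor
    · intro hxy; nlinarith
    · intro hxy; nlinarith
  have hball : ∀ θ, (f θ ∈ ball c₃ r₃ ↔ t < Real.cos θ) := by
    intro θ
    rw [mem_ball, hsq_iff _ _ dist_nonneg hr₃.le, hdist θ, ht_def, div_lt_iff₀ h2rd]
    constructor <;> intro hh <;> nlinarith
  have hsph : ∀ θ, (f θ ∈ sphere c₃ r₃ ↔ Real.cos θ = t) := by
    intro θ
    rw [mem_sphere]
    constructor
    · intro hh
      have : dist (f θ) c₃ ^ 2 = r₃ ^ 2 := by rw [hh]
      rw [hdist θ] at this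
      rw [ht_def, eq_comm, div_eq_iff h2rd.ne']; nlinarith
    · intro hh
      have h1 : dist (f θ) c₃ ^ 2 = r₃ ^ 2 := by
        rw [hdist θ, hh, ht_def]; field_simp; ring
      nlinarith [dist_nonneg (x := f θ) (y := c₃), hr₃]
  have hout : ∀ θ, (f θ ∈ (closedBall c₃ r₃)ᶜ ↔ Real.cos θ < t) := by
    intro θ
    rw [Set.mem_compl_iff, mem_closedBall, not_le,
      hsq_iff _ _ hr₃.le dist_nonneg, hdist θ, ht_def, lt_div_iff₀ h2rd]
    constructor <;> intro hh <;> nlinarith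
  -- surjectivity of the parametrization
  have hsurj : ∀ z ∈ sphere c₁ r₁, z = f (Complex.arg ((z - c₁) / u)) := by
    intro z hz
    have habs : ‖(z - c₁) / u‖ = r₁ := by
      rw [norm_div, hu, div_one]
      rw [mem_sphere, Complex.dist_eq] at hz; exact hz
    have h1 := Complex.norm_mul_exp_arg_mul_I ((z - c₁) / u)
    rw [habs] at h1
    rw [hf_def]
    simp only
    rw [h1, div_mul_cancel₀ _ hune]; ring
  -- t is strictly between -1 and 1
  have hcos_one : ∀ θ, Real.cos θ = 1 → Complex.exp (θ * I) = 1 := by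
    intro θ hθ
    have : Complex.normSq (Complex.exp (θ * I) - 1) = 0 := by
      rw [Complex.normSq_sub]
      have h2 : Complex.normSq (Complex.exp (θ * I)) = 1 := by
        rw [Complex.normSq_eq_norm_sq, Complex.norm_exp_ofReal_mul_I]; norm_num
      rw [h2]
      simp [Complex.exp_ofReal_mul_I_re, hθ]
      norm_num
    have := Complex.normSq_eq_zero.mp this
    linear_combination this
  have hcos_neg_one : ∀ θ, Real.cos θ = -1 → Complex.exp (θ * I) = -1 := by
    intro θ hθ
    have : Complex.normSq (Complex.exp (θ * I) + 1) = 0 := by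
      rw [Complex.normSq_add]
      have h2 : Complex.normSq (Complex.exp (θ * I)) = 1 := by
        rw [Complex.normSq_eq_norm_sq, Complex.norm_exp_ofReal_mul_I]; norm_num
      rw [h2]
      simp [Complex.exp_ofReal_mul_I_re, hθ]
      norm_num
    have := Complex.normSq_eq_zero.mp this
    linear_combination this
  have hcos_a : Real.cos (Complex.arg ((a - c₁) / u)) = t := by
    have := hsurj a ha.1
    exact (hsph _).mp (this ▸ ha.2)
  have hcos_b : Real.cos (Complex.arg ((b - c₁) / u)) = t := by
    have := hsurj b hb.1
    exact (hsph _).mp (this ▸ hb.2)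
  have ht_le : -1 ≤ t ∧ t ≤ 1 := by
    constructor
    · rw [← hcos_a]; exact Real.neg_one_le_cos _
    · rw [← hcos_a]; exact Real.cos_le_one _
  have ht1 : t ≠ 1 := by
    intro hc
    apply hab
    have e1 := hcos_one _ (hcos_a.trans hc)
    have e2 := hcos_one _ (hcos_b.trans hc)
    rw [hsurj a ha.1, hsurj b hb.1, hf_def]
    simp only [e1, e2]
  have ht2 : t ≠ -1 := by
    intro hc
    apply hab
    have e1 := hcos_neg_one _ (hcos_a.trans hc)
    have e2 := hcos_neg_one _ (hcos_b.trans hc)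
    rw [hsurj a ha.1, hsurj b hb.1, hf_def]
    simp only [e1, e2]
  have ht_lt1 : t < 1 := lt_of_le_of_ne ht_le.2 ht1
  have ht_gt : -1 < t := lt_of_le_of_ne ht_le.1 (Ne.symm ht2)
  set θ₀ : ℝ := Real.arccos t with hθ₀_def
  have hθ₀pos : 0 < θ₀ := Real.arccos_pos.mpr ht_lt1
  have hθ₀ltpi : θ₀ < π := by
    refine lt_of_le_of_ne (Real.arccos_le_pi t) ?_
    intro hc
    exact absurd (Real.arccos_eq_pi.mp hc) (by linarith)
  have hcosθ₀ : Real.cos θ₀ = t := Real.cos_arccos ht_gt.le ht_lt1.le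
  -- the inner arc
  have hin : sphere c₁ r₁ ∩ ball c₃ r₃ = f '' Ioo (-θ₀) θ₀ := by
    ext z
    constructor
    · rintro ⟨hz1, hz2⟩
      set θ := Complex.arg ((z - c₁) / u) with hθdef
      have hz' := hsurj z hz1
      have hcos : t < Real.cos θ := (hball θ).mp (hz' ▸ hz2)
      refine ⟨θ, ?_, hz'.symm⟩
      have hio := Complex.arg_mem_Ioc ((z - c₁) / u)
      have habs : |θ| < θ₀ := by
        by_contra hcon
        push_neg at hcon
        have h5 : Real.cos |θ| ≤ Real.cos θ₀ :=
          Real.cos_le_cos_of_nonneg_of_le_pi (Real.arccos_nonneg t)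
            (abs_le.mpr ⟨by linarith [hio.1], hio.2⟩) hcon
        rw [Real.cos_abs, hcosθ₀] at h5
        linarith
      exact abs_lt.mp habs
    · rintro ⟨θ, hθ, rfl⟩
      refine ⟨hfs θ, (hball θ).mpr ?_⟩
      have h5 : Real.cos θ₀ < Real.cos |θ| :=
        Real.cos_lt_cos_of_nonneg_of_le_pi (abs_nonneg θ) hθ₀ltpi.le
          (abs_lt.mpr ⟨hθ.1, hθ.2⟩)
      rw [Real.cos_abs, hcosθ₀] at h5
      exact h5
  -- periodicity
  have hperiod : ∀ θ, f (θ + 2 * π) = f θ := by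
    intro θ
    have hexp : Complex.exp (((θ + 2 * π : ℝ) : ℂ) * I) = Complex.exp ((θ : ℝ) * I) := by
      have h9 : ((θ + 2 * π : ℝ) : ℂ) * I = (θ : ℝ) * I + 2 * (π : ℝ) * I := by
        push_cast; ring
      rw [h9, Complex.exp_add, Complex.exp_two_pi_mul_I, mul_one]
    simp only [hf_def, hexp]
  -- the outer arc
  have hout' : sphere c₁ r₁ ∩ (closedBall c₃ r₃)ᶜ = f '' Ioo θ₀ (2 * π - θ₀) := by
    ext z
    constructor
    · rintro ⟨hz1, hz2⟩
      set θ := Complex.arg ((z - c₁) / u) with hθdef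
      have hz' := hsurj z hz1
      have hcos : Real.cos θ < t := (hout θ).mp (hz' ▸ hz2)
      have hio := Complex.arg_mem_Ioc ((z - c₁) / u)
      have hθne0 : θ ≠ 0 := by
        rintro hc
        rw [hc, Real.cos_zero] at hcos
        linarith
      rcases lt_or_gt_of_ne hθne0 with hneg | hpos
      · refine ⟨θ + 2 * π, ⟨by linarith [hio.1], ?_⟩, by rw [hperiod]; exact hz'.symm⟩
        have hlt : θ₀ < -θ := by
          by_contra hcon
          push_neg at hcon
          have h5 : Real.cos θ₀ ≤ Real.cos (-θ) :=
            Real.cos_le_cos_of_nonneg_of_le_pi (by linarith) hθ₀ltpi.le hcon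
          rw [Real.cos_neg, hcosθ₀] at h5
          linarith
        linarith
      · refine ⟨θ, ⟨?_, by linarith [hio.2]⟩, hz'.symm⟩
        by_contra hcon
        push_neg at hcon
        have h5 : Real.cos θ₀ ≤ Real.cos θ :=
          Real.cos_le_cos_of_nonneg_of_le_pi hpos.le (Real.arccos_le_pi t) hcon
        rw [hcosθ₀] at h5
        linarith
    · rintro ⟨θ, hθ, rfl⟩
      refine ⟨hfs θ, (hout θ).mpr ?_⟩
      rcases le_or_gt θ π with hle | hgt
      · have h5 : Real.cos θ < Real.cos θ₀ :=
          Real.cos_lt_cos_of_nonneg_of_le_pi (Real.arccos_nonneg t) hle hθ.1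
        rwa [hcosθ₀] at h5
      · have h5 : Real.cos (2 * π - θ) < Real.cos θ₀ :=
          Real.cos_lt_cos_of_nonneg_of_le_pi (Real.arccos_nonneg t) (by linarith)
            (by linarith [hθ.2])
        rw [Real.cos_two_pi_sub, hcosθ₀] at h5
        exact h5
  constructor
  · rw [hin]
    exact (isConnected_Ioo (by linarith : -θ₀ < θ₀)).image f hfc.continuousOn
  · rw [hout']
    refine (isConnected_Ioo ?_).image f hfc.continuousOn
    linarith [Real.pi_pos]

private lemma key_E2 (c₁ c₃ : E2) (r₁ r₃ : ℝ) (hr₁ : 0 < r₁) (hr₃ : 0 < r₃)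
    (a b : E2) (hab : a ≠ b)
    (h : sphere c₁ r₁ ∩ sphere c₃ r₃ = {a, b}) :
    IsConnected (sphere c₁ r₁ ∩ ball c₃ r₃) ∧
    IsConnected (sphere c₁ r₁ ∩ (closedBall c₃ r₃)ᶜ) := by
  set Ψ : ℂ ≃ᵢ E2 :=
    (Complex.isometryOfOrthonormal (EuclideanSpace.basisFun (Fin 2) ℝ)).toIsometryEquiv with hΨ
  have hinj : Function.Injective Ψ := Ψ.injective
  have hinj' : Function.Injective Ψ.symm := Ψ.symm.injective
  have h' : sphere (Ψ.symm c₁) r₁ ∩ sphere (Ψ.symm c₃) r₃ =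
      ({Ψ.symm a, Ψ.symm b} : Set ℂ) := by
    have := congrArg (fun s => Ψ.symm '' s) h
    simpa [Set.image_inter hinj', Ψ.symm.image_sphere, Set.image_pair] using this
  have hab' : Ψ.symm a ≠ Ψ.symm b := fun hc => hab (hinj' hc)
  obtain ⟨h1, h2⟩ := key_complex (Ψ.symm c₁) (Ψ.symm c₃) r₁ r₃ hr₁ hr₃ _ _ hab' h'
  constructor
  · have := h1.image Ψ Ψ.continuous.continuousOn
    rwa [Set.image_inter hinj, Ψ.image_sphere, Ψ.image_ball, Ψ.apply_symm_apply,
      Ψ.apply_symm_apply] at this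
  · have := h2.image Ψ Ψ.continuous.continuousOn
    rwa [Set.image_inter hinj, Ψ.image_sphere,
      Set.image_compl_eq Ψ.bijective, Ψ.image_closedBall, Ψ.apply_symm_apply,
      Ψ.apply_symm_apply] at this

/-- Let `{C₁, C₂, C₃}` be an arrangement of three circles.  Then `C₃` separates the two
intersection points of `C₁` and `C₂` if and only if these two intersection points lie in
different connected components of `C₁ \ (C₁ ∩ C₃)`. -/
theorem stmt2 (c₁ c₂ c₃ : E2) (r₁ r₂ r₃ : ℝ)
    (hr₁ : 0 < r₁) (hr₂ : 0 < r₂) (hr₃ : 0 < r₃)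
    (h12 : ∃ p q : E2, p ≠ q ∧ Metric.sphere c₁ r₁ ∩ Metric.sphere c₂ r₂ = {p, q})
    (h13 : ∃ p q : E2, p ≠ q ∧ Metric.sphere c₁ r₁ ∩ Metric.sphere c₃ r₃ = {p, q})
    (h23 : ∃ p q : E2, p ≠ q ∧ Metric.sphere c₂ r₂ ∩ Metric.sphere c₃ r₃ = {p, q})
    (hno3 : ∀ x : E2, ¬ (x ∈ Metric.sphere c₁ r₁ ∧ x ∈ Metric.sphere c₂ r₂ ∧
      x ∈ Metric.sphere c₃ r₃)) :
    ∀ p q : E2, p ≠ q → Metric.sphere c₁ r₁ ∩ Metric.sphere c₂ r₂ = {p, q} →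
      (Xor' (p ∈ Metric.ball c₃ r₃) (q ∈ Metric.ball c₃ r₃) ↔
        connectedComponentIn (Metric.sphere c₁ r₁ \ (Metric.sphere c₁ r₁ ∩ Metric.sphere c₃ r₃)) p ≠
        connectedComponentIn (Metric.sphere c₁ r₁ \ (Metric.sphere c₁ r₁ ∩ Metric.sphere c₃ r₃)) q) := by
  intro p q hpq hset
  obtain ⟨a, b, hab, h13'⟩ := h13
  have hp12 : p ∈ sphere c₁ r₁ ∩ sphere c₂ r₂ := by rw [hset]; exact Or.inl rfl
  have hq12 : q ∈ sphere c₁ r₁ ∩ sphere c₂ r₂ := by rw [hset]; exact Or.inr rfl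
  have hp3 : p ∉ sphere c₃ r₃ := fun hc => hno3 p ⟨hp12.1, hp12.2, hc⟩
  have hq3 : q ∉ sphere c₃ r₃ := fun hc => hno3 q ⟨hq12.1, hq12.2, hc⟩
  set S := sphere c₁ r₁ \ (sphere c₁ r₁ ∩ sphere c₃ r₃) with hS
  have hpS : p ∈ S := ⟨hp12.1, fun hc => hp3 hc.2⟩
  have hqS : q ∈ S := ⟨hq12.1, fun hc => hq3 hc.2⟩
  have hSsub : S ⊆ ball c₃ r₃ ∪ (closedBall c₃ r₃)ᶜ := by
    rintro x ⟨hx1, hx2⟩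
    rcases lt_trichotomy (dist x c₃) r₃ with hlt | heq | hgt
    · exact Or.inl hlt
    · exact absurd ⟨hx1, heq⟩ hx2
    · exact Or.inr (by simpa [mem_closedBall, not_le] using hgt)
  have hdisj : Disjoint (ball c₃ r₃) ((closedBall c₃ r₃)ᶜ) :=
    disjoint_compl_right.mono_left ball_subset_closedBall
  obtain ⟨hconn_in, hconn_out⟩ := key_E2 c₁ c₃ r₁ r₃ hr₁ hr₃ a b hab h13'
  have hsub_in : sphere c₁ r₁ ∩ ball c₃ r₃ ⊆ S := by
    rintro x ⟨hx1, hx2⟩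
    refine ⟨hx1, fun hc => ?_⟩
    have : dist x c₃ = r₃ := mem_sphere.mp hc.2
    have : dist x c₃ < r₃ := mem_ball.mp hx2
    linarith
  have hsub_out : sphere c₁ r₁ ∩ (closedBall c₃ r₃)ᶜ ⊆ S := by
    rintro x ⟨hx1, hx2⟩
    refine ⟨hx1, fun hc => hx2 ?_⟩
    rw [mem_closedBall]
    exact le_of_eq (mem_sphere.mp hc.2)
  have hsame : ∀ T : Set E2, IsConnected T → T ⊆ S → ∀ x y, x ∈ T → y ∈ T →
      connectedComponentIn S x = connectedComponentIn S y := by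
    intro T hT hTS x y hx hy
    exact connectedComponentIn_eq (hT.isPreconnected.subset_connectedComponentIn hx hTS hy)
  have hdiff : ∀ x y, x ∈ S → y ∈ S → x ∈ ball c₃ r₃ → y ∈ (closedBall c₃ r₃)ᶜ →
      connectedComponentIn S x ≠ connectedComponentIn S y := by
    intro x y hx hy hxb hyb hc
    have h1 : connectedComponentIn S x ⊆ ball c₃ r₃ :=
      isPreconnected_connectedComponentIn.subset_left_of_subset_union isOpen_ball
        Metric.isClosed_closedBall.isOpen_compl hdisj
        ((connectedComponentIn_subset S x).trans hSsub)
        ⟨x, mem_connectedComponentIn hx, hxb⟩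
    have h2 : y ∈ ball c₃ r₃ := h1 (hc ▸ mem_connectedComponentIn hy)
    exact hyb (ball_subset_closedBall h2)
  constructor
  · rintro (⟨hpb, hqb⟩ | ⟨hqb, hpb⟩)
    · have hq' : q ∈ (closedBall c₃ r₃)ᶜ := (hSsub hqS).resolve_left hqb
      exact hdiff p q hpS hqS hpb hq'
    · have hp' : p ∈ (closedBall c₃ r₃)ᶜ := (hSsub hpS).resolve_left hpb
      exact fun hc => hdiff q p hqS hpS hqb hp' hc.symm
  · intro hne
    by_contra hxor
    rw [Xor', xor_def] at hxor
    push_neg at hxor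
    rcases hSsub hpS with hpb | hpb
    · have hqb : q ∈ ball c₃ r₃ := hxor.1 hpb
      exact hne (hsame _ hconn_in hsub_in p q ⟨hpS.1, hpb⟩ ⟨hqS.1, hqb⟩)
    · have hpb' : p ∉ ball c₃ r₃ := fun hc => hpb (ball_subset_closedBall hc)
      have hqb : q ∈ (closedBall c₃ r₃)ᶜ := by
        rcases hSsub hqS with hq' | hq'
        · exact absurd hpb' (not_not.mpr (hxor.2 hq'))
        · exact hq'
      exact hne (hsame _ hconn_out hsub_out p q ⟨hpS.1, hpb⟩ ⟨hqS.1, hqb⟩)
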